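/- arXiv:0903.0830 — 3 statements merged into one kernel-verified Lean document; each statement's English description precedes it below -/
import Mathlib

section
/- Let A be a von Neumann algebra, σ, τ : A → A algebra homomorphisms, M a Banach A-bimodule, and d : A → M a linear map such that d(p) = σ(p)d(p) + d(p)τ(p) for every projection p in A. Then for any two orthogonal projections p, q in A (i.e. pq = qp = 0), one has σ(p)d(q) + d(p)τ(q) + σ(q)d(p) + d(q)τ(p) = 0. -/
/-- The elements of a von Neumann algebra form a normed `ℂ`-algebra. -/
noncomputable instance VonNeumannAlgebra.instNormedAlgebraCarrier
    {H : Type*} [NormedAddCommGroup H] [InnerProductSpace ℂ H] [CompleteSpace H]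
    (A : VonNeumannAlgebra H) : NormedAlgebra ℂ ↥A :=
  inferInstanceAs (NormedAlgebra ℂ ↥A.toStarSubalgebra)

open MulOpposite in
/-- If `d` satisfies `d p = σ p • d p + d p • τ p` on projections of a von Neumann algebra,
then for orthogonal projections `p, q` one has
`σ p • d q + d p • τ q + σ q • d p + d q • τ p = 0`. -/
theorem stmt4 {H : Type*} [NormedAddCommGroup H] [InnerProductSpace ℂ H] [CompleteSpace H]
    (A : VonNeumannAlgebra H)
    {M : Type*} [NormedAddCommGroup M] [NormedSpace ℂ M] [CompleteSpace M]
    [Module ↥A M] [Module (↥A)ᵐᵒᵖ M] [SMulCommClass ↥A (↥A)ᵐᵒᵖ M]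
    [IsScalarTower ℂ ↥A M] [IsScalarTower ℂ (↥A)ᵐᵒᵖ M]
    [IsBoundedSMul ↥A M] [IsBoundedSMul (↥A)ᵐᵒᵖ M]
    (σ τ : ↥A →ₐ[ℂ] ↥A) (d : ↥A →ₗ[ℂ] M)
    (hd : ∀ p : ↥A, IsIdempotentElem p → IsSelfAdjoint p →
      d p = σ p • d p + op (τ p) • d p)
    (p q : ↥A) (hp : IsIdempotentElem p) (hp' : IsSelfAdjoint p)
    (hq : IsIdempotentElem q) (hq' : IsSelfAdjoint q)
    (hpq : p * q = 0) (hqp : q * p = 0) :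
    σ p • d q + op (τ q) • d p + σ q • d p + op (τ p) • d q = 0 := by
  have h1 := hd p hp hp'
  have h2 := hd q hq hq'
  have hidem : IsIdempotentElem (p + q) := by
    unfold IsIdempotentElem at *
    rw [add_mul, mul_add, mul_add, hp, hq, hpq, hqp]
    abel
  have h3 := hd (p + q) hidem (hp'.add hq')
  simp only [map_add, add_smul, smul_add, MulOpposite.op_add] at h3
  nth_rewrite 1 [h1, h2] at h3
  have h := sub_eq_zero_of_eq h3.symm
  rw [← h]; abel
end

section
/- Let A be a von Neumann algebra, σ, τ : A → A algebra homomorphisms, M a Banach A-bimodule, and d : A → M a linear map such that d(p) = σ(p)d(p) + d(p)τ(p) for every projection p in A. Then for every finite linear combination a = Σ_{j=1}^{n} λ_j p_j of mutually orthogonal projections p_1, …, p_n in A with complex coefficients λ_j, one has d(a²) = σ(a)d(a) + d(a)τ(a). -/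
set_option maxHeartbeats 1000000


open MulOpposite in
/-- If `d` satisfies `d p = σ p • d p + d p • τ p` on projections of a von Neumann algebra,
then `d (a²) = σ a • d a + d a • τ a` for every finite complex linear combination `a`
of mutually orthogonal projections. -/
theorem stmt5 {H : Type*} [NormedAddCommGroup H] [InnerProductSpace ℂ H] [CompleteSpace H]
    (A : VonNeumannAlgebra H)
    {M : Type*} [NormedAddCommGroup M] [NormedSpace ℂ M] [CompleteSpace M]
    [Module ↥A M] [Module (↥A)ᵐᵒᵖ M] [SMulCommClass ↥A (↥A)ᵐᵒᵖ M]
    [IsScalarTower ℂ ↥A M] [IsScalarTower ℂ (↥A)ᵐᵒᵖ M]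
    [IsBoundedSMul ↥A M] [IsBoundedSMul (↥A)ᵐᵒᵖ M]
    (σ τ : ↥A →ₐ[ℂ] ↥A) (d : ↥A →ₗ[ℂ] M)
    (hd : ∀ p : ↥A, IsIdempotentElem p → IsSelfAdjoint p →
      d p = σ p • d p + op (τ p) • d p)
    (n : ℕ) (lam : Fin n → ℂ) (p : Fin n → ↥A)
    (hp : ∀ j, IsIdempotentElem (p j)) (hp' : ∀ j, IsSelfAdjoint (p j))
    (horth : ∀ i j, i ≠ j → p i * p j = 0)
    (a : ↥A) (ha : a = ∑ j, lam j • p j) :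
    d (a * a) = σ a • d a + op (τ a) • d a := by
  subst ha
  set F : Fin n → Fin n → M := fun i j =>
    (lam i * lam j) • (σ (p i) • d (p j) + op (τ (p j)) • d (p i)) with hF
  -- key cross-term cancellation
  have key : ∀ i j, i ≠ j → F i j + F j i = 0 := by
    intro i j hij
    have hq : IsIdempotentElem (p i + p j) := by
      unfold IsIdempotentElem
      rw [mul_add, add_mul, add_mul, (hp i), (hp j), horth i j hij, horth j i hij.symm]
      abel
    have hsa : IsSelfAdjoint (p i + p j) := (hp' i).add (hp' j)
    have hC : σ (p i) • d (p j) + op (τ (p j)) • d (p i) +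
        (σ (p j) • d (p i) + op (τ (p i)) • d (p j)) = 0 := by
      have h0 : d (p i) + d (p j) =
          (σ (p i) • d (p i) + op (τ (p i)) • d (p i)) +
          (σ (p j) • d (p j) + op (τ (p j)) • d (p j)) +
          (σ (p i) • d (p j) + op (τ (p j)) • d (p i) +
            (σ (p j) • d (p i) + op (τ (p i)) • d (p j))) := by
        have h := hd (p i + p j) hq hsa
        simp only [map_add, MulOpposite.op_add, add_smul, smul_add] at h
        rw [h]; abel
      rw [← hd (p i) (hp i) (hp' i), ← hd (p j) (hp j) (hp' j)] at h0
      exact left_eq_add.mp h0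
    have hFij : F i j + F j i = (lam i * lam j) •
        (σ (p i) • d (p j) + op (τ (p j)) • d (p i) +
          (σ (p j) • d (p i) + op (τ (p i)) • d (p j))) := by
      rw [hF]; simp only [smul_add]
      rw [mul_comm (lam j) (lam i)]
    rw [hFij, hC, smul_zero]
  -- LHS computation
  have hmul : (∑ j, lam j • p j) * (∑ j, lam j • p j) = ∑ j, (lam j * lam j) • p j := by
    rw [Finset.sum_mul_sum]
    refine Finset.sum_congr rfl fun i _ => ?_
    rw [Finset.sum_eq_single i]
    · rw [smul_mul_smul_comm, (hp i)]
    · intro j _ hj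
      rw [smul_mul_smul_comm, horth i j (fun h => hj h.symm), smul_zero]
    · exact fun h => absurd (Finset.mem_univ i) h
  have hLHS : d ((∑ j, lam j • p j) * (∑ j, lam j • p j)) = ∑ j, F j j := by
    rw [hmul, map_sum]
    refine Finset.sum_congr rfl fun j _ => ?_
    rw [map_smul, hd (p j) (hp j) (hp' j), hF]
  -- RHS computation
  have hσ : σ (∑ j, lam j • p j) • d (∑ j, lam j • p j)
      = ∑ i, ∑ j, (lam i * lam j) • (σ (p i) • d (p j)) := by
    simp only [map_sum, map_smul]
    rw [Finset.sum_smul]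
    refine Finset.sum_congr rfl fun i _ => ?_
    rw [Finset.smul_sum]
    refine Finset.sum_congr rfl fun j _ => ?_
    rw [smul_assoc, smul_comm (σ (p i)) (lam j), smul_smul]
  have hτ : op (τ (∑ j, lam j • p j)) • d (∑ j, lam j • p j)
      = ∑ i, ∑ j, (lam i * lam j) • (op (τ (p j)) • d (p i)) := by
    conv_rhs => rw [Finset.sum_comm]
    have hop : op (τ (∑ j, lam j • p j)) = ∑ j, lam j • op (τ (p j)) := by
      simp only [map_sum, map_smul]
      exact (map_sum (MulOpposite.opAddEquiv : ↥A ≃+ (↥A)ᵐᵒᵖ) _ _).trans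
        (Finset.sum_congr rfl fun j _ => MulOpposite.op_smul _ _)
    rw [hop, map_sum, Finset.sum_smul]
    simp only [map_smul]
    refine Finset.sum_congr rfl fun j _ => ?_
    rw [Finset.smul_sum]
    refine Finset.sum_congr rfl fun i _ => ?_
    rw [smul_assoc, smul_comm (op (τ (p j))) (lam i), smul_smul, mul_comm (lam j) (lam i)]
  have hsplit : (∑ i, ∑ j, F i j)
      = (∑ i, ∑ j, (lam i * lam j) • (σ (p i) • d (p j)))
        + ∑ i, ∑ j, (lam i * lam j) • (op (τ (p j)) • d (p i)) := by
    simp only [hF, smul_add, Finset.sum_add_distrib]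
  rw [hLHS, hσ, hτ, ← hsplit]
  -- diagonal extraction
  have hsym : (∑ i, ∑ j, F i j) = ∑ i, ∑ j, F j i := Finset.sum_comm
  have h2 : (∑ i, ∑ j, F i j) + (∑ i, ∑ j, F i j)
      = (∑ j, F j j) + (∑ j, F j j) := by
    calc (∑ i, ∑ j, F i j) + (∑ i, ∑ j, F i j)
        = ∑ i, ∑ j, (F i j + F j i) := by
          nth_rewrite 2 [hsym]
          rw [← Finset.sum_add_distrib]
          exact Finset.sum_congr rfl fun i _ => (Finset.sum_add_distrib).symm
      _ = ∑ i, ∑ j, (if i = j then F i j + F j i else 0) := by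
          refine Finset.sum_congr rfl fun i _ => Finset.sum_congr rfl fun j _ => ?_
          split
          · rfl
          · exact key i j (by assumption)
      _ = ∑ i, (F i i + F i i) := by
          refine Finset.sum_congr rfl fun i _ => ?_
          simp
      _ = (∑ j, F j j) + (∑ j, F j j) := Finset.sum_add_distrib
  have h2' : (2 : ℂ) • (∑ i, ∑ j, F i j) = (2 : ℂ) • (∑ j, F j j) := by
    rw [two_smul, two_smul]; exact h2
  exact (smul_right_injective M two_ne_zero h2').symm
end

section
/- Let A be a unital complex Banach algebra, M a Banach A-bimodule, S ∈ A, τ : A → A a bounded algebra homomorphism such that τ(S) is a right separating point of M, σ : A → A a bounded Jordan homomorphism, and f : A → M a bounded linear map satisfying f(ab) = σ(a)f(b) + f(a)τ(b) for all a, b ∈ A with ab = S. Then f is a (σ,τ)-Jordan derivation, and moreover f(Sa) = σ(S)f(a) + f(S)τ(a) and f(aS) = σ(a)f(S) + f(a)τ(S) for all a ∈ A. -/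
open MulOpposite NormedSpace

section AuxSmul

variable {A : Type*} [NormedRing A] [NormedAlgebra ℂ A]
variable {M : Type*} [NormedAddCommGroup M] [NormedSpace ℂ M]
variable [Module A M] [IsScalarTower ℂ A M] [IsBoundedSMul A M]

omit [IsBoundedSMul A M] in private lemma aux_smul_comm (c : ℂ) (a : A) (m : M) :
    a • c • m = c • a • m := by
  calc a • c • m = a • ((c • (1 : A)) • m) := by rw [smul_assoc, one_smul]
    _ = (a * (c • (1 : A))) • m := (mul_smul _ _ _).symm
    _ = (c • (a * 1)) • m := by rw [mul_smul_comm]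
    _ = (c • a) • m := by rw [mul_one]
    _ = c • a • m := smul_assoc _ _ _

noncomputable def smulCLM (A M : Type*) [NormedRing A] [NormedAlgebra ℂ A]
    [NormedAddCommGroup M] [NormedSpace ℂ M]
    [Module A M] [IsScalarTower ℂ A M] [IsBoundedSMul A M] : A →L[ℂ] M →L[ℂ] M :=
  LinearMap.mkContinuous₂
    (LinearMap.mk₂ ℂ (· • ·) (fun a b m => add_smul a b m) (fun c a m => smul_assoc c a m)
      (fun a m n => smul_add a m n) (fun c a m => aux_smul_comm c a m))
    1 (fun a m => by simpa using _root_.norm_smul_le a m)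

@[simp] lemma smulCLM_apply (a : A) (m : M) : (smulCLM A M a : M →L[ℂ] M) m = a • m := rfl

lemma HasDerivAt.smulAM {x : ℂ → A} {x' : A} {m : ℂ → M} {m' : M} {t : ℂ}
    (hx : HasDerivAt x x' t) (hm : HasDerivAt m m' t) :
    HasDerivAt (fun s => x s • m s) (x' • m t + x t • m') t := by
  have hc : HasDerivAt (fun s => (smulCLM A M (x s) : M →L[ℂ] M)) (smulCLM A M x') t :=
    (smulCLM A M).hasFDerivAt.comp_hasDerivAt t hx
  simpa using hc.clm_apply hm

end AuxSmul

open MulOpposite in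
/-- Let `A` be a unital complex Banach algebra, `M` a Banach `A`-bimodule, `S ∈ A`,
`τ` a bounded algebra homomorphism with `τ S` a right separating point of `M`,
`σ` a bounded Jordan homomorphism, and `f` a bounded linear map with
`f (a*b) = σ a • f b + f a • τ b` whenever `a * b = S`. Then `f` is a `(σ,τ)`-Jordan
derivation and `f (S*a) = σ S • f a + f S • τ a`, `f (a*S) = σ a • f S + f a • τ S`. -/
theorem stmt8 {A : Type*} [NormedRing A] [NormedAlgebra ℂ A] [CompleteSpace A]
    {M : Type*} [NormedAddCommGroup M] [NormedSpace ℂ M] [CompleteSpace M]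
    [Module A M] [Module Aᵐᵒᵖ M] [SMulCommClass A Aᵐᵒᵖ M]
    [IsScalarTower ℂ A M] [IsScalarTower ℂ Aᵐᵒᵖ M]
    [IsBoundedSMul A M] [IsBoundedSMul Aᵐᵒᵖ M]
    (S : A) (τ : A →L[ℂ] A)
    (hτmul : ∀ a b : A, τ (a * b) = τ a * τ b) (hτone : τ 1 = 1)
    (hsep : ∀ m : M, op (τ S) • m = 0 → m = 0)
    (σ : A →L[ℂ] A) (hσ : ∀ a : A, σ (a * a) = σ a * σ a)
    (f : A →L[ℂ] M)
    (hf : ∀ a b : A, a * b = S → f (a * b) = σ a • f b + op (τ b) • f a) :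
    (∀ a : A, f (a * a) = σ a • f a + op (τ a) • f a) ∧
      (∀ a : A, f (S * a) = σ S • f a + op (τ a) • f S) ∧
      (∀ a : A, f (a * S) = σ a • f S + op (τ S) • f a) := by
  haveI : SMulCommClass Aᵐᵒᵖ A M := SMulCommClass.symm _ _ _
  -- derivative of the basic bilinear expression
  have hD : ∀ (x m : ℂ → A) (x' m' : A) (t : ℂ), HasDerivAt x x' t → HasDerivAt m m' t →
      HasDerivAt (fun s => σ (x s) • f (m s) + op (τ (m s)) • f (x s))
        ((σ x' • f (m t) + σ (x t) • f m') + (op (τ m') • f (x t) + op (τ (m t)) • f x')) t := by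
    intro x m x' m' t hx hm
    have hσx : HasDerivAt (fun s => σ (x s)) (σ x') t :=
      σ.hasFDerivAt.comp_hasDerivAt t hx
    have hfm : HasDerivAt (fun s => f (m s)) (f m') t :=
      f.hasFDerivAt.comp_hasDerivAt t hm
    have hfx : HasDerivAt (fun s => f (x s)) (f x') t :=
      f.hasFDerivAt.comp_hasDerivAt t hx
    have hop : HasDerivAt (fun s => (op (τ (m s)) : Aᵐᵒᵖ)) (op (τ m')) t :=
      ((MulOpposite.opContinuousLinearEquiv (R := ℂ) (M := A)).toContinuousLinearMap.comp
        τ).hasFDerivAt.comp_hasDerivAt t hm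
    exact (hσx.smulAM hfm).add (hop.smulAM hfx)
  -- identities coming from the exponential families
  have hexp : ∀ a : A,
      (σ 1 • f (a * S) + op (τ (a * S)) • f 1 = σ a • f S + op (τ S) • f a) ∧
      (σ (a*a) • f S + op (τ S) • f (a*a) + (σ 1 • f (a*a*S) + op (τ (a*a*S)) • f 1)
        = (σ a • f (a*S) + op (τ (a*S)) • f a) + (σ a • f (a*S) + op (τ (a*S)) • f a)) ∧
      (σ S • f a + op (τ a) • f S = σ (S*a) • f 1 + f (S*a)) := by
    intro a
    set u : ℂ → A := fun t => exp (t • a) with hu_def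
    have hu : ∀ t : ℂ, HasDerivAt u (a * u t) t := fun t => hasDerivAt_exp_smul_const' a t
    have hu0 : u 0 = 1 := by
      simp only [hu_def, zero_smul]
      exact exp_zero
    have huneg : ∀ t : ℂ, HasDerivAt (fun s : ℂ => u (-s)) (-(a * u (-t))) t := by
      intro t
      have h := (hu (-t)).scomp t (hasDerivAt_neg t)
      simpa [Function.comp_def] using h
    have hmulinv : ∀ t : ℂ, u t * u (-t) = 1 := by
      intro t
      have hc : Commute (t • a) ((-t) • a) := ((Commute.refl a).smul_right (-t)).smul_left t
      rw [hu_def]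
      simp only
      rw [← exp_add_of_commute_of_mem_ball (𝕂 := ℂ) hc
        ((expSeries_radius_eq_top ℂ A).symm ▸ edist_lt_top _ _)
        ((expSeries_radius_eq_top ℂ A).symm ▸ edist_lt_top _ _), ← add_smul, add_neg_cancel, zero_smul]
      exact exp_zero
    have hm : ∀ t : ℂ, HasDerivAt (fun s => u (-s) * S) (-(a * u (-t) * S)) t := by
      intro t
      simpa [neg_mul] using (huneg t).mul_const S
    have hFconst : ∀ t : ℂ, σ (u t) • f (u (-t) * S) + op (τ (u (-t) * S)) • f (u t) = f S := by
      intro t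
      have hprod : u t * (u (-t) * S) = S := by rw [← mul_assoc, hmulinv t, one_mul]
      have h := hf (u t) (u (-t) * S) hprod
      rw [hprod] at h
      exact h.symm
    have hstar : ∀ t : ℂ,
        σ (a * u t) • f (u (-t) * S) + op (τ (u (-t) * S)) • f (a * u t)
          = σ (u t) • f (a * u (-t) * S) + op (τ (a * u (-t) * S)) • f (u t) := by
      intro t
      have hF := hD u (fun s => u (-s) * S) (a * u t) (-(a * u (-t) * S)) t (hu t) (hm t)
      have hzero : (σ (a * u t) • f (u (-t) * S) + σ (u t) • f (-(a * u (-t) * S)))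
          + (op (τ (-(a * u (-t) * S))) • f (u t) + op (τ (u (-t) * S)) • f (a * u t)) = 0 := by
        have hconst : (fun s : ℂ => σ (u s) • f (u (-s) * S) + op (τ (u (-s) * S)) • f (u s))
            = fun _ => f S := funext hFconst
        rw [hconst] at hF
        exact hF.unique (hasDerivAt_const t (f S))
      simp only [map_neg, op_neg, neg_smul, smul_neg] at hzero
      rw [← sub_eq_zero, ← hzero]
      abel
    refine ⟨?_, ?_, ?_⟩
    · have hI0 := hstar 0
      simp only [neg_zero, hu0, mul_one, one_mul] at hI0
      exact hI0.symm
    · -- second derivative at 0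
      have hx1 : HasDerivAt (fun s => a * u s) (a * (a * u 0)) 0 := (hu 0).const_mul a
      have hm2 : HasDerivAt (fun s => a * u (-s) * S) ((a * -(a * u (-0))) * S) 0 :=
        ((huneg 0).const_mul a).mul_const S
      have hL := hD (fun s => a * u s) (fun s => u (-s) * S)
        (a * (a * u 0)) (-(a * u (-0) * S)) 0 hx1 (hm 0)
      have hR := hD u (fun s => a * u (-s) * S)
        (a * u 0) ((a * -(a * u (-0))) * S) 0 (hu 0) hm2
      have heq := hL.unique
        (hR.congr_of_eventuallyEq (Filter.Eventually.of_forall fun s => hstar s))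
      simp only [neg_zero, hu0, mul_one, one_mul, mul_neg, neg_mul, map_neg, op_neg,
        neg_smul, smul_neg, ← mul_assoc] at heq
      rw [← sub_eq_zero] at heq ⊢
      rw [← heq]
      abel
    · -- the G family, first derivative at 0
      have hGconst : ∀ t : ℂ,
          σ (S * u (-t)) • f (u t) + op (τ (u t)) • f (S * u (-t)) = f S := by
        intro t
        have hinv : u (-t) * u t = 1 := by simpa using hmulinv (-t)
        have hprod : (S * u (-t)) * u t = S := by rw [mul_assoc, hinv, mul_one]
        have h := hf (S * u (-t)) (u t) hprod
        rw [hprod] at h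
        exact h.symm
      have hw : HasDerivAt (fun s => S * u (-s)) (S * -(a * u (-0))) 0 :=
        (huneg 0).const_mul S
      have hG := hD (fun s => S * u (-s)) u (S * -(a * u (-0))) (a * u 0) 0 hw (hu 0)
      have hGzero : (σ (S * -(a * u (-0))) • f (u 0) + σ (S * u (-0)) • f (a * u 0))
          + (op (τ (a * u 0)) • f (S * u (-0)) + op (τ (u 0)) • f (S * -(a * u (-0)))) = 0 := by
        have hconst : (fun s : ℂ => σ (S * u (-s)) • f (u s) + op (τ (u s)) • f (S * u (-s)))
            = fun _ => f S := funext hGconst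
        rw [hconst] at hG
        exact hG.unique (hasDerivAt_const 0 (f S))
      simp only [neg_zero, hu0, mul_one, one_mul, mul_neg, neg_mul, map_neg, op_neg,
        neg_smul, smul_neg, hτone, op_one, one_smul] at hGzero
      rw [← sub_eq_zero, ← hGzero]
      abel
  have hI : ∀ a : A, σ 1 • f (a * S) + op (τ (a * S)) • f 1 = σ a • f S + op (τ S) • f a :=
    fun a => (hexp a).1
  have hIII := fun a : A => (hexp a).2.1
  have hII := fun a : A => (hexp a).2.2
  -- σ(1) is a unit for the range of σ
  have e1 : σ 1 * σ 1 = σ 1 := by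
    have h := hσ 1
    rw [one_mul] at h
    exact h.symm
  have h21 : ∀ x : A, σ x + σ x = σ 1 * σ x + σ x * σ 1 := by
    intro x
    have h := hσ (x + 1)
    rw [show (x+1)*(x+1) = x*x + ((x + x) + 1) by noncomm_ring] at h
    rw [map_add, map_add, map_add, hσ x, map_add] at h
    rw [add_mul, mul_add, mul_add, e1] at h
    rw [← sub_eq_zero] at h ⊢
    rw [← h]
    abel
  have hcomm1 : ∀ x : A, σ 1 * σ x = σ x ∧ σ x * σ 1 = σ x := by
    intro x
    have h := h21 x
    have hL : σ 1 * σ x = σ 1 * σ x * σ 1 := by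
      have h2 := congrArg (fun y => σ 1 * y) h
      simp only [mul_add, ← mul_assoc, e1] at h2
      exact add_left_cancel h2
    have hR : σ x * σ 1 = σ 1 * σ x * σ 1 := by
      have h2 := congrArg (fun y => y * σ 1) h
      simp only [add_mul, mul_assoc, e1] at h2
      have h3 := add_right_cancel h2
      exact h3.trans (mul_assoc _ _ _).symm
    have hxe : σ 1 * σ x = σ x * σ 1 := hL.trans hR.symm
    have h2 : (2:ℂ) • σ x = (2:ℂ) • (σ 1 * σ x) := by
      rw [two_smul ℂ (σ x), two_smul ℂ (σ 1 * σ x), h, ← hxe]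
    have hx1 : σ x = σ 1 * σ x := smul_right_injective A two_ne_zero h2
    exact ⟨hx1.symm, by rw [← hxe, ← hx1]⟩
  -- module algebra
  have hA : f S = σ 1 • f S + op (τ S) • f 1 := by
    have h := hf 1 S (one_mul S)
    rwa [one_mul] at h
  have hB : op (τ S) • f 1 = f S - σ 1 • f S := eq_sub_of_add_eq' hA.symm
  have hσ1f1 : σ 1 • f 1 = 0 := by
    apply hsep
    rw [smul_comm, hB, smul_sub, smul_smul, e1, sub_self]
  have hW : ∀ x : A, op (τ S) • f x = σ 1 • f (x * S) + op (τ (x * S)) • f 1 - σ x • f S := by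
    intro x
    rw [hI x]
    abel
  have hIX : ∀ x : A, f x - σ 1 • f x = op (τ x) • f 1 := by
    intro x
    rw [← sub_eq_zero]
    apply hsep
    rw [smul_sub, smul_sub, smul_comm (op (τ S)) (σ 1), smul_smul, ← op_mul, ← hτmul x S, hW x,
      smul_sub, smul_add, smul_smul, e1, smul_comm (σ 1) (op (τ (x * S))), hσ1f1, smul_zero,
      smul_smul, (hcomm1 x).1]
    abel
  have goal3 : ∀ a : A, f (a * S) = σ a • f S + op (τ S) • f a := by
    intro a
    rw [← hI a, ← hIX (a * S)]
    abel
  have goal3' : ∀ a : A, op (τ S) • f a = f (a * S) - σ a • f S := by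
    intro a
    rw [goal3 a]
    abel
  have goal1 : ∀ a : A, f (a * a) = σ a • f a + op (τ a) • f a := by
    intro a
    have hVI : σ (a*a) • f S + op (τ S) • f (a*a) = σ a • f (a*S) + op (τ (a*S)) • f a := by
      have h3 := hIII a
      rw [hI (a*a)] at h3
      have h4 : (2:ℂ) • (σ (a*a) • f S + op (τ S) • f (a*a))
          = (2:ℂ) • (σ a • f (a*S) + op (τ (a*S)) • f a) := by
        rw [two_smul ℂ, two_smul ℂ]
        exact h3
      exact smul_right_injective M two_ne_zero h4
    rw [← sub_eq_zero]
    apply hsep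
    rw [smul_sub, smul_add, smul_comm (op (τ S)) (σ a), smul_smul, ← op_mul, ← hτmul a S,
      goal3' a,
      show op (τ S) • f (a*a) = σ a • f (a*S) + op (τ (a*S)) • f a - σ (a*a) • f S from by
        rw [← hVI]; abel,
      smul_sub, smul_smul, ← hσ a]
    abel
  have goal2 : ∀ a : A, f (S * a) = σ S • f a + op (τ a) • f S := by
    intro a
    have hz : σ (S * a) • f 1 = 0 := by
      apply hsep
      rw [smul_comm, hB, smul_sub, smul_smul, (hcomm1 (S*a)).2, sub_self]
    have h := hII a
    rw [hz, zero_add] at h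
    exact h.symm
  exact ⟨goal1, goal2, goal3⟩
end
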